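/- Let a ∈ (1/4, 1/2) and b ∈ (1/3, 1/2) satisfy a + 2b > 4/3. Then sup_{(ξ,τ)∈ℝ²} |ξ|⟨ξ⟩ ⟨τ−ξ³⟩^{−a} ( ∫_{D(ξ,τ)} ⟨−τ₁+ξ₁²⟩^{−2b} ⟨τ−τ₁+(ξ−ξ₁)²⟩^{−2b} ⟨ξ₁⟩^{−2} ⟨ξ−ξ₁⟩^{−2} dτ₁ dξ₁ )^{1/2} < ∞, where D(ξ,τ) = {(ξ₁,τ₁) ∈ ℝ² : ⟨τ−ξ³⟩ ≥ ⟨−τ₁+ξ₁²⟩ and ⟨τ−ξ³⟩ ≥ ⟨τ−τ₁+(ξ−ξ₁)²⟩}. -/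

import Mathlib

open MeasureTheory Real Set

noncomputable section

/-- Japanese bracket `⟨c⟩ = 1 + |c|`. -/
def jb (c : ℝ) : ℝ := 1 + |c|

lemma one_le_jb (c : ℝ) : 1 ≤ jb c := by simp [jb, abs_nonneg]
lemma jb_pos (c : ℝ) : 0 < jb c := lt_of_lt_of_le one_pos (one_le_jb c)
lemma jb_ge_abs (c : ℝ) : |c| ≤ jb c := by simp [jb]
lemma continuous_jb : Continuous jb := continuous_const.add continuous_abs
lemma jb_rpow_nonneg (c e : ℝ) : 0 ≤ jb c ^ e := Real.rpow_nonneg (jb_pos c).le _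
lemma jb_rpow_le_one {c e : ℝ} (he : e ≤ 0) : jb c ^ e ≤ 1 :=
  Real.rpow_le_one_of_one_le_of_nonpos (one_le_jb c) he

lemma rpow_neg_two (u : ℝ) (hu : 0 < u) : u ^ (-(2:ℝ)) = (u ^ 2)⁻¹ := by
  rw [← Real.rpow_natCast u 2, ← Real.rpow_neg hu.le]
  norm_num

lemma sq_rpow_half (u : ℝ) (hu : 0 ≤ u) : (u ^ 2) ^ (1/2 : ℝ) = u := by
  rw [← Real.rpow_natCast u 2, ← Real.rpow_mul hu]
  norm_num

lemma Kjb_cont : Continuous (fun x : ℝ => jb x ^ (-(2:ℝ))) :=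
  continuous_jb.rpow_const (fun x => Or.inl (jb_pos x).ne')

lemma Kjb_shift_cont (ξ : ℝ) : Continuous (fun x : ℝ => jb (ξ - x) ^ (-(2:ℝ))) :=
  (continuous_jb.comp (continuous_const.sub continuous_id)).rpow_const
    (fun x => Or.inl (jb_pos _).ne')

lemma Kjb_int : Integrable (fun x : ℝ => jb x ^ (-(2:ℝ))) := by
  have := integrable_one_add_norm (E := ℝ) (μ := volume) (r := 2) (by norm_num)
  simpa [jb] using this

lemma Kjb_shift_int (ξ : ℝ) : Integrable (fun x : ℝ => jb (ξ - x) ^ (-(2:ℝ))) := by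
  have := Kjb_int.comp_sub_right ξ
  have h : ∀ x : ℝ, jb (x - ξ) = jb (ξ - x) := fun x => by rw [jb, jb, abs_sub_comm]
  simpa [h] using this

lemma Kjb_shift_integral (ξ : ℝ) :
    ∫ x : ℝ, jb (ξ - x) ^ (-(2:ℝ)) = ∫ x : ℝ, jb x ^ (-(2:ℝ)) := by
  have := integral_sub_right_eq_self (μ := volume) (fun x : ℝ => jb x ^ (-(2:ℝ))) ξ
  have h : ∀ x : ℝ, jb (x - ξ) = jb (ξ - x) := fun x => by rw [jb, jb, abs_sub_comm]
  rw [← this]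
  simp [h]

lemma wcont (b2 : ℝ) : Continuous (fun s : ℝ => (1 + |s|) ^ (-b2)) := by
  apply Continuous.rpow_const (continuous_const.add continuous_abs)
  intro x; left; show (1:ℝ) + |x| ≠ 0; positivity

lemma hint (b2 M : ℝ) :
    Integrable ((Icc (-M) M).indicator (fun s : ℝ => (1 + |s|) ^ (-b2))) := by
  rw [integrable_indicator_iff measurableSet_Icc]
  exact (wcont b2).continuousOn.integrableOn_compact isCompact_Icc

lemma hkey (b2 M : ℝ) (hb2b : b2 < 1) (hM : 0 ≤ M) :
    ∫ s in (0:ℝ)..M, (1 + s) ^ (-b2) ≤ (1 + M) ^ (1 - b2) / (1 - b2) := by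
  have h1 : ∫ s in (0:ℝ)..M, (1 + s) ^ (-b2) = ∫ u in (1:ℝ)..(M+1), u ^ (-b2) := by
    have := intervalIntegral.integral_comp_add_right (a := (0:ℝ)) (b := M)
      (fun u : ℝ => u ^ (-b2)) 1
    simpa [add_comm] using this
  have e : -b2 + 1 = 1 - b2 := by ring
  rw [h1, integral_rpow (Or.inl (by linarith))]
  calc ((M+1) ^ (-b2 + 1) - (1:ℝ) ^ (-b2 + 1)) / (-b2 + 1)
      ≤ (M+1) ^ (-b2 + 1) / (-b2 + 1) := by
        apply div_le_div_of_nonneg_right ?_ (by linarith)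
        nlinarith [Real.one_rpow (-b2+1)]
    _ = (1 + M) ^ (1 - b2) / (1 - b2) := by rw [e, add_comm M 1]

lemma hval (b2 M : ℝ) (hb2b : b2 < 1) (hM : 0 ≤ M) :
    ∫ s, (Icc (-M) M).indicator (fun s : ℝ => (1 + |s|) ^ (-b2)) s
      ≤ 2 * (1 + M) ^ (1 - b2) / (1 - b2) := by
  rw [integral_indicator measurableSet_Icc]
  have hsplit : Icc (-M) M = Icc (-M) 0 ∪ Ioc 0 M :=
    (Icc_union_Ioc_eq_Icc (by linarith) hM).symm
  have hdisj : Disjoint (Icc (-M) (0:ℝ)) (Ioc 0 M) := by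
    rw [Set.disjoint_left]; rintro x ⟨_, hx2⟩ ⟨hx3, _⟩; linarith
  have hi1 : IntegrableOn (fun s : ℝ => (1 + |s|) ^ (-b2)) (Icc (-M) 0) :=
    (wcont b2).continuousOn.integrableOn_compact isCompact_Icc
  have hi2 : IntegrableOn (fun s : ℝ => (1 + |s|) ^ (-b2)) (Ioc 0 M) :=
    ((wcont b2).continuousOn.integrableOn_compact isCompact_Icc).mono_set Ioc_subset_Icc_self
  rw [hsplit, setIntegral_union hdisj measurableSet_Ioc hi1 hi2]
  have p2 : ∫ s in Ioc (0:ℝ) M, (1 + |s|) ^ (-b2) ≤ (1 + M) ^ (1 - b2) / (1 - b2) := by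
    have : ∫ s in Ioc (0:ℝ) M, (1 + |s|) ^ (-b2) = ∫ s in Ioc (0:ℝ) M, (1 + s) ^ (-b2) := by
      apply setIntegral_congr_fun measurableSet_Ioc
      intro s hs; simp [abs_of_pos hs.1]
    rw [this, ← intervalIntegral.integral_of_le hM]
    exact hkey b2 M hb2b hM
  have p1 : ∫ s in Icc (-M) (0:ℝ), (1 + |s|) ^ (-b2) ≤ (1 + M) ^ (1 - b2) / (1 - b2) := by
    have e0 : ∫ s in Icc (-M) (0:ℝ), (1 + |s|) ^ (-b2)
        = ∫ s in Ioc (-M) (0:ℝ), (1 + |s|) ^ (-b2) := integral_Icc_eq_integral_Ioc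
    have e1 : ∫ s in Ioc (-M) (0:ℝ), (1 + |s|) ^ (-b2)
        = ∫ s in Ioc (-M) (0:ℝ), (1 + (-s)) ^ (-b2) := by
      apply setIntegral_congr_fun measurableSet_Ioc
      intro s hs; simp only []; rw [abs_of_nonpos hs.2]
    have e2 : ∫ s in (-M)..(0:ℝ), (1 + (-s)) ^ (-b2) = ∫ s in (0:ℝ)..M, (1 + s) ^ (-b2) := by
      have := intervalIntegral.integral_comp_neg (a := -M) (b := (0:ℝ))
        (fun u : ℝ => (1 + u) ^ (-b2))
      simpa using this
    rw [e0, e1, ← intervalIntegral.integral_of_le (by linarith : -M ≤ (0:ℝ)), e2]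
    exact hkey b2 M hb2b hM
  calc _ ≤ (1 + M) ^ (1 - b2) / (1 - b2) + (1 + M) ^ (1 - b2) / (1 - b2) := add_le_add p1 p2
    _ = 2 * (1 + M) ^ (1 - b2) / (1 - b2) := by ring

lemma fubini_G (K h : ℝ → ℝ) (hKm : Measurable K) (hhm : Measurable h)
    (hKi : Integrable K) (hhi : Integrable h) :
    Integrable (fun q : ℝ × ℝ => K q.1 * h (q.2 - q.1 ^ 2)) ∧
    ∫ q : ℝ × ℝ, K q.1 * h (q.2 - q.1 ^ 2) = (∫ x, K x) * ∫ s, h s := by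
  have hGm : Measurable (fun q : ℝ × ℝ => K q.1 * h (q.2 - q.1 ^ 2)) :=
    (hKm.comp measurable_fst).mul
      (hhm.comp (measurable_snd.sub ((measurable_fst.pow_const 2))))
  have hvol : (volume : Measure (ℝ × ℝ)) = (volume : Measure ℝ).prod volume :=
    Measure.volume_eq_prod ℝ ℝ
  have hGi : Integrable (fun q : ℝ × ℝ => K q.1 * h (q.2 - q.1 ^ 2)) := by
    rw [hvol]
    rw [integrable_prod_iff hGm.aestronglyMeasurable]
    constructor
    · refine Filter.Eventually.of_forall (fun x => ?_)
      exact (hhi.comp_sub_right (x ^ 2)).const_mul (K x)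
    · have : ∀ x : ℝ, (∫ y : ℝ, ‖K x * h (y - x ^ 2)‖) = ‖K x‖ * ∫ s : ℝ, ‖h s‖ := by
        intro x
        simp_rw [norm_mul]
        rw [integral_const_mul]
        congr 1
        exact integral_sub_right_eq_self (fun y => ‖h y‖) (x ^ 2)
      simp_rw [this]
      exact hKi.norm.mul_const _
  refine ⟨hGi, ?_⟩
  rw [hvol] at hGi ⊢
  rw [integral_prod _ hGi]
  have : ∀ x : ℝ, (∫ y : ℝ, K x * h (y - x ^ 2)) = K x * ∫ s, h s := by
    intro x
    rw [integral_const_mul]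
    congr 1
    exact integral_sub_right_eq_self h (x ^ 2)
  simp_rw [this]
  exact integral_mul_const _ _

lemma Smeas (ξ τ : ℝ) : MeasurableSet {q : ℝ × ℝ |
    jb (-q.2 + q.1 ^ 2) ≤ jb (τ - ξ ^ 3) ∧
    jb (τ - q.2 + (ξ - q.1) ^ 2) ≤ jb (τ - ξ ^ 3)} := by
  have h1 : Continuous (fun q : ℝ × ℝ => jb (-q.2 + q.1 ^ 2)) :=
    continuous_jb.comp ((continuous_snd.neg).add (continuous_fst.pow 2))
  have h2 : Continuous (fun q : ℝ × ℝ => jb (τ - q.2 + (ξ - q.1) ^ 2)) :=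
    continuous_jb.comp (((continuous_const.sub continuous_snd)).add
      ((continuous_const.sub continuous_fst).pow 2))
  exact (measurableSet_le h1.measurable measurable_const).inter
    (measurableSet_le h2.measurable measurable_const)

lemma key (b2 : ℝ) (hb2b : b2 < 1) (ξ τ : ℝ)
    (K : ℝ → ℝ) (hKm : Measurable K) (hK0 : ∀ x, 0 ≤ K x) (hKi : Integrable K)
    (hbd : ∀ q : ℝ × ℝ,
      jb (-q.2 + q.1 ^ 2) ≤ jb (τ - ξ ^ 3) →
      jb (τ - q.2 + (ξ - q.1) ^ 2) ≤ jb (τ - ξ ^ 3) →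
      jb (τ - q.2 + (ξ - q.1) ^ 2) ^ (-b2) * (jb q.1 ^ (-(2:ℝ)) * jb (ξ - q.1) ^ (-(2:ℝ)))
        ≤ K q.1) :
    (∫ q : ℝ × ℝ in {q : ℝ × ℝ |
        jb (-q.2 + q.1 ^ 2) ≤ jb (τ - ξ ^ 3) ∧
        jb (τ - q.2 + (ξ - q.1) ^ 2) ≤ jb (τ - ξ ^ 3)},
      jb (-q.2 + q.1 ^ 2) ^ (-b2) * jb (τ - q.2 + (ξ - q.1) ^ 2) ^ (-b2) *
        jb q.1 ^ (-(2 : ℝ)) * jb (ξ - q.1) ^ (-(2 : ℝ)))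
    ≤ (∫ x, K x) * (2 * jb (τ - ξ ^ 3) ^ (1 - b2) / (1 - b2)) := by
  set L := jb (τ - ξ ^ 3) with hLdef
  set M := L - 1 with hMdef
  have hM0 : 0 ≤ M := by have := one_le_jb (τ - ξ ^ 3); rw [hMdef]; linarith
  set h : ℝ → ℝ := (Icc (-M) M).indicator (fun s : ℝ => (1 + |s|) ^ (-b2)) with hhdef
  have hhm : Measurable h := ((wcont b2).measurable).indicator measurableSet_Icc
  have hh0 : ∀ s, 0 ≤ h s := fun s =>
    Set.indicator_nonneg (fun t _ => Real.rpow_nonneg (by positivity) _) s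
  have hhi : Integrable h := hint b2 M
  set S : Set (ℝ × ℝ) := {q : ℝ × ℝ |
      jb (-q.2 + q.1 ^ 2) ≤ L ∧ jb (τ - q.2 + (ξ - q.1) ^ 2) ≤ L} with hSdef
  have hS : MeasurableSet S := Smeas ξ τ
  obtain ⟨hGi, hGeq⟩ := fubini_G K h hKm hhm hKi hhi
  set f : ℝ × ℝ → ℝ := fun q =>
    jb (-q.2 + q.1 ^ 2) ^ (-b2) * jb (τ - q.2 + (ξ - q.1) ^ 2) ^ (-b2) *
      jb q.1 ^ (-(2 : ℝ)) * jb (ξ - q.1) ^ (-(2 : ℝ)) with hfdef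
  have hpt : ∀ q : ℝ × ℝ, S.indicator f q ≤ K q.1 * h (q.2 - q.1 ^ 2) := by
    intro q
    by_cases hq : q ∈ S
    · rw [Set.indicator_of_mem hq]
      obtain ⟨h1, h2⟩ := hq
      have habs : |(-q.2 + q.1 ^ 2)| = |q.2 - q.1 ^ 2| := by
        rw [show -q.2 + q.1 ^ 2 = -(q.2 - q.1 ^ 2) by ring, abs_neg]
      have hmem : q.2 - q.1 ^ 2 ∈ Icc (-M) M := by
        have h1' : 1 + |(-q.2 + q.1 ^ 2)| ≤ L := h1
        rw [habs] at h1'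
        have := abs_le.mp (by linarith : |q.2 - q.1 ^ 2| ≤ M)
        exact ⟨this.1, this.2⟩
      have hh : h (q.2 - q.1 ^ 2) = jb (-q.2 + q.1 ^ 2) ^ (-b2) := by
        rw [hhdef, Set.indicator_of_mem hmem]
        rw [jb, habs]
      calc f q = jb (-q.2 + q.1 ^ 2) ^ (-b2) *
            (jb (τ - q.2 + (ξ - q.1) ^ 2) ^ (-b2) *
              (jb q.1 ^ (-(2:ℝ)) * jb (ξ - q.1) ^ (-(2:ℝ)))) := by rw [hfdef]; ring
        _ ≤ jb (-q.2 + q.1 ^ 2) ^ (-b2) * K q.1 :=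
            mul_le_mul_of_nonneg_left (hbd q h1 h2) (jb_rpow_nonneg _ _)
        _ = K q.1 * h (q.2 - q.1 ^ 2) := by rw [hh]; ring
    · rw [Set.indicator_of_notMem hq]
      exact mul_nonneg (hK0 _) (hh0 _)
  have hf0 : ∀ q, 0 ≤ S.indicator f q := by
    intro q
    apply Set.indicator_nonneg
    intro q' _
    exact mul_nonneg (mul_nonneg (mul_nonneg (jb_rpow_nonneg _ _) (jb_rpow_nonneg _ _))
      (jb_rpow_nonneg _ _)) (jb_rpow_nonneg _ _)
  calc ∫ q in S, f q = ∫ q, S.indicator f q := (integral_indicator hS).symm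
    _ ≤ ∫ q : ℝ × ℝ, K q.1 * h (q.2 - q.1 ^ 2) :=
        integral_mono_of_nonneg (Filter.Eventually.of_forall hf0) hGi
          (Filter.Eventually.of_forall hpt)
    _ = (∫ x, K x) * ∫ s, h s := hGeq
    _ ≤ (∫ x, K x) * (2 * L ^ (1 - b2) / (1 - b2)) := by
        apply mul_le_mul_of_nonneg_left ?_ (integral_nonneg hK0)
        have := hval b2 M hb2b hM0
        rwa [show (1:ℝ) + M = L by rw [hMdef]; ring] at this

lemma mul_le_mul4 {a a' b b' c c' d d' : ℝ} (ha : a ≤ a') (hb : b ≤ b') (hc : c ≤ c')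
    (hd : d ≤ d') (h0b : 0 ≤ b) (h0c : 0 ≤ c) (h0d : 0 ≤ d)
    (h0a' : 0 ≤ a') (h0b' : 0 ≤ b') (h0c' : 0 ≤ c') :
    a * b * c * d ≤ a' * b' * c' * d' :=
  mul_le_mul (mul_le_mul (mul_le_mul ha hb h0b h0a') hc h0c (mul_nonneg h0a' h0b'))
    hd h0d (mul_nonneg (mul_nonneg h0a' h0b') h0c')

lemma half_step {I X L e : ℝ} (hI0 : 0 ≤ I) (hX : 0 ≤ X) (hL : 0 ≤ L)
    (h : I ≤ X * L ^ e) :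
    I ^ (1/2:ℝ) ≤ X ^ (1/2:ℝ) * L ^ (e * (1/2)) := by
  calc I ^ (1/2:ℝ) ≤ (X * L ^ e) ^ (1/2:ℝ) := Real.rpow_le_rpow hI0 h (by norm_num)
    _ = X ^ (1/2:ℝ) * (L ^ e) ^ (1/2:ℝ) := Real.mul_rpow hX (Real.rpow_nonneg hL e)
    _ = X ^ (1/2:ℝ) * L ^ (e * (1/2)) := by rw [← Real.rpow_mul hL]

lemma ptB (ξ x : ℝ) : jb x ^ (-(2:ℝ)) * jb (ξ - x) ^ (-(2:ℝ))
    ≤ 4 / jb ξ ^ 2 * (jb x ^ (-(2:ℝ)) + jb (ξ - x) ^ (-(2:ℝ))) := by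
  have hu := jb_pos x
  have hv := jb_pos (ξ - x)
  have hw := jb_pos ξ
  have hsum : jb ξ ≤ jb x + jb (ξ - x) := by
    have habs : |ξ| ≤ |x| + |ξ - x| := by
      calc |ξ| = |x + (ξ - x)| := by ring_nf
        _ ≤ |x| + |ξ - x| := abs_add_le _ _
    simp only [jb]
    linarith [abs_nonneg x, abs_nonneg (ξ - x)]
  rw [rpow_neg_two _ hu, rpow_neg_two _ hv]
  set u := jb x
  set v := jb (ξ - x)
  set w := jb ξ
  have h2 : w^2 ≤ 2*(u^2+v^2) := by
    nlinarith [sq_nonneg (u-v), mul_le_mul hsum hsum hw.le (by positivity : (0:ℝ) ≤ u + v)]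
  rw [div_mul_eq_mul_div, le_div_iff₀ (by positivity : (0:ℝ) < w^2)]
  have hstep : (u^2)⁻¹ * (v^2)⁻¹ * w^2 ≤ (u^2)⁻¹ * (v^2)⁻¹ * (2*(u^2+v^2)) := by
    apply mul_le_mul_of_nonneg_left h2
    exact mul_nonneg (inv_nonneg.mpr (sq_nonneg u)) (inv_nonneg.mpr (sq_nonneg v))
  have heq : (u^2)⁻¹ * (v^2)⁻¹ * (2*(u^2+v^2)) = 2 * ((u^2)⁻¹+(v^2)⁻¹) := by
    field_simp
    ring
  have hnn : 0 ≤ (u^2)⁻¹+(v^2)⁻¹ := by positivity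
  nlinarith [hstep, heq]

set_option maxHeartbeats 1000000 in
/-- Region I estimate in the proof of `‖∂ₓ(g h̄)‖_{Y_{-a,1}} ≤ C‖g‖_{X_{b,1}}‖h‖_{X_{b,1}}`:
for `a ∈ (1/4,1/2)`, `b ∈ (1/3,1/2)` with `a + 2b > 4/3`, the sup over `(ξ,τ)` of
`|ξ|⟨ξ⟩⟨τ-ξ³⟩^{-a} (∫_{D(ξ,τ)} ⟨-τ₁+ξ₁²⟩^{-2b} ⟨τ-τ₁+(ξ-ξ₁)²⟩^{-2b} ⟨ξ₁⟩^{-2} ⟨ξ-ξ₁⟩^{-2}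
dτ₁ dξ₁)^{1/2}` is finite, where `D(ξ,τ)` consists of `(ξ₁,τ₁)` with
`⟨τ-ξ³⟩ ≥ ⟨-τ₁+ξ₁²⟩` and `⟨τ-ξ³⟩ ≥ ⟨τ-τ₁+(ξ-ξ₁)²⟩`. -/
theorem stmt8 (a b : ℝ) (ha : a ∈ Set.Ioo (1/4 : ℝ) (1/2)) (hb : b ∈ Set.Ioo (1/3 : ℝ) (1/2))
    (hab : 4/3 < a + 2 * b) :
    ∃ C : ℝ, ∀ ξ τ : ℝ,
      |ξ| * jb ξ * jb (τ - ξ ^ 3) ^ (-a) *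
        (∫ q : ℝ × ℝ in {q : ℝ × ℝ |
            jb (-q.2 + q.1 ^ 2) ≤ jb (τ - ξ ^ 3) ∧
            jb (τ - q.2 + (ξ - q.1) ^ 2) ≤ jb (τ - ξ ^ 3)},
          jb (-q.2 + q.1 ^ 2) ^ (-(2 * b)) * jb (τ - q.2 + (ξ - q.1) ^ 2) ^ (-(2 * b)) *
            jb q.1 ^ (-(2 : ℝ)) * jb (ξ - q.1) ^ (-(2 : ℝ))) ^ (1/2 : ℝ)
        ≤ C := by
  obtain ⟨ha1, ha2⟩ := ha
  obtain ⟨hb1, hb2⟩ := hb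
  have hab2 : 5/6 < a + b := by linarith
  have h1b : (0:ℝ) < 1 - 2*b := by linarith
  set B0 := ∫ x : ℝ, jb x ^ (-(2:ℝ)) with hB0def
  have hB0 : 0 ≤ B0 := integral_nonneg fun x => jb_rpow_nonneg _ _
  set D : ℝ := 2 / (1 - 2*b) with hDdef
  have hD : 0 < D := div_pos two_pos h1b
  have hBD : 0 ≤ B0 * D := mul_nonneg hB0 hD.le
  have hBD8 : 0 ≤ 8 * (B0 * D) := by linarith
  have hr1 : 0 ≤ (B0*D) ^ (1/2:ℝ) := Real.rpow_nonneg hBD _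
  have hr2 : 0 ≤ (8*(B0*D)) ^ (1/2:ℝ) := Real.rpow_nonneg hBD8 _
  refine ⟨72 * (B0*D) ^ (1/2:ℝ) + 24 * (8*(B0*D)) ^ (1/2:ℝ) + 6 * (B0*D) ^ (1/2:ℝ), ?_⟩
  intro ξ τ
  set L := jb (τ - ξ ^ 3) with hLdef
  have hL1 : 1 ≤ L := one_le_jb _
  have hL0 : 0 < L := jb_pos _
  set c : ℝ := -a + (1 - 2*b) * (1/2) with hcdef
  have hc0 : c ≤ 0 := by rw [hcdef]; linarith
  have hLc : L ^ (-a) * L ^ ((1-2*b) * (1/2)) = L ^ c := by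
    rw [← Real.rpow_add hL0, hcdef]
  have hLc1 : L ^ c ≤ 1 := Real.rpow_le_one_of_one_le_of_nonpos hL1 hc0
  have hLcnn : 0 ≤ L ^ c := Real.rpow_nonneg hL0.le _
  set S : Set (ℝ × ℝ) := {q : ℝ × ℝ |
      jb (-q.2 + q.1 ^ 2) ≤ L ∧ jb (τ - q.2 + (ξ - q.1) ^ 2) ≤ L} with hSdef
  set Itg : ℝ := ∫ q : ℝ × ℝ in S,
      jb (-q.2 + q.1 ^ 2) ^ (-(2 * b)) * jb (τ - q.2 + (ξ - q.1) ^ 2) ^ (-(2 * b)) *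
        jb q.1 ^ (-(2 : ℝ)) * jb (ξ - q.1) ^ (-(2 : ℝ)) with hItgdef
  have hI0 : 0 ≤ Itg := by
    rw [hItgdef]
    apply setIntegral_nonneg (Smeas ξ τ)
    intro q _
    exact mul_nonneg (mul_nonneg (mul_nonneg (jb_rpow_nonneg _ _) (jb_rpow_nonneg _ _))
      (jb_rpow_nonneg _ _)) (jb_rpow_nonneg _ _)
  have hQnn : 0 ≤ |ξ| * jb ξ * L ^ (-a) :=
    mul_nonneg (mul_nonneg (abs_nonneg ξ) (jb_pos ξ).le) (jb_rpow_nonneg _ _)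
  have hb2lt : (2:ℝ)*b < 1 := by linarith
  by_cases hξ : |ξ| ≤ 8
  · -- Case A : |ξ| ≤ 8
    have hbd : ∀ q : ℝ × ℝ,
        jb (-q.2 + q.1 ^ 2) ≤ jb (τ - ξ ^ 3) →
        jb (τ - q.2 + (ξ - q.1) ^ 2) ≤ jb (τ - ξ ^ 3) →
        jb (τ - q.2 + (ξ - q.1) ^ 2) ^ (-(2*b)) *
          (jb q.1 ^ (-(2:ℝ)) * jb (ξ - q.1) ^ (-(2:ℝ)))
          ≤ (fun x => jb x ^ (-(2:ℝ))) q.1 := by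
      intro q _ _
      have e1 : jb (τ - q.2 + (ξ - q.1)^2) ^ (-(2*b)) ≤ 1 := jb_rpow_le_one (by linarith)
      have e2 : jb (ξ - q.1) ^ (-(2:ℝ)) ≤ 1 := jb_rpow_le_one (by norm_num)
      calc jb (τ - q.2 + (ξ - q.1) ^ 2) ^ (-(2*b)) *
            (jb q.1 ^ (-(2:ℝ)) * jb (ξ - q.1) ^ (-(2:ℝ)))
          ≤ 1 * (jb q.1 ^ (-(2:ℝ)) * 1) :=
            mul_le_mul e1 (mul_le_mul_of_nonneg_left e2 (jb_rpow_nonneg _ _))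
              (mul_nonneg (jb_rpow_nonneg _ _) (jb_rpow_nonneg _ _)) one_pos.le
        _ = (fun x => jb x ^ (-(2:ℝ))) q.1 := by simp
    have hIb := key (2*b) hb2lt ξ τ _ Kjb_cont.measurable
      (fun x => jb_rpow_nonneg _ _) Kjb_int hbd
    rw [← hLdef, ← hB0def] at hIb
    have hIb' : Itg ≤ (B0*D) * L ^ (1-2*b) := by
      calc Itg ≤ B0 * (2 * L ^ (1-2*b)/(1-2*b)) := hIb
        _ = (B0*D) * L ^ (1-2*b) := by rw [hDdef]; ring
    have hhalf := half_step hI0 hBD hL0.le hIb'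
    have hjbξ : jb ξ ≤ 9 := by simp only [jb]; linarith
    calc |ξ| * jb ξ * L ^ (-a) * Itg ^ (1/2:ℝ)
        ≤ |ξ| * jb ξ * L ^ (-a) * ((B0*D) ^ (1/2:ℝ) * L ^ ((1-2*b)*(1/2))) :=
          mul_le_mul_of_nonneg_left hhalf hQnn
      _ = |ξ| * jb ξ * (L ^ (-a) * L ^ ((1-2*b)*(1/2))) * (B0*D) ^ (1/2:ℝ) := by ring
      _ = |ξ| * jb ξ * L ^ c * (B0*D) ^ (1/2:ℝ) := by rw [hLc]
      _ ≤ 8 * 9 * 1 * (B0*D) ^ (1/2:ℝ) :=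
          mul_le_mul4 hξ hjbξ hLc1 le_rfl (jb_pos ξ).le hLcnn hr1
            (by norm_num) (by norm_num) (by norm_num)
      _ = 72 * (B0*D) ^ (1/2:ℝ) := by ring
      _ ≤ 72 * (B0*D) ^ (1/2:ℝ) + 24 * (8*(B0*D)) ^ (1/2:ℝ) + 6 * (B0*D) ^ (1/2:ℝ) := by
          linarith
  · push_neg at hξ
    have hξ1 : (1:ℝ) ≤ |ξ| := by linarith
    have hξp : (0:ℝ) < |ξ| := by linarith
    have hξ0 : ξ ≠ 0 := by
      intro h
      rw [h] at hξp
      simp at hξp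
    have hx2 : (0:ℝ) < ξ^2 := by nlinarith [sq_abs ξ]
    by_cases hLξ : |ξ|^3 ≤ 8*L
    · -- Case B : big L
      set K : ℝ → ℝ := fun x => 4 / jb ξ ^ 2 * (jb x ^ (-(2:ℝ)) + jb (ξ - x) ^ (-(2:ℝ)))
        with hKdef
      have hKm : Measurable K :=
        ((continuous_const.mul (Kjb_cont.add (Kjb_shift_cont ξ)))).measurable
      have hK0 : ∀ x, 0 ≤ K x := fun x =>
        mul_nonneg (div_nonneg (by norm_num) (sq_nonneg _))
          (add_nonneg (jb_rpow_nonneg _ _) (jb_rpow_nonneg _ _))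
      have hKi : Integrable K := (Kjb_int.add (Kjb_shift_int ξ)).const_mul _
      have hbd : ∀ q : ℝ × ℝ,
          jb (-q.2 + q.1 ^ 2) ≤ jb (τ - ξ ^ 3) →
          jb (τ - q.2 + (ξ - q.1) ^ 2) ≤ jb (τ - ξ ^ 3) →
          jb (τ - q.2 + (ξ - q.1) ^ 2) ^ (-(2*b)) *
            (jb q.1 ^ (-(2:ℝ)) * jb (ξ - q.1) ^ (-(2:ℝ))) ≤ K q.1 := by
        intro q _ _
        calc jb (τ - q.2 + (ξ - q.1) ^ 2) ^ (-(2*b)) *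
              (jb q.1 ^ (-(2:ℝ)) * jb (ξ - q.1) ^ (-(2:ℝ)))
            ≤ 1 * (jb q.1 ^ (-(2:ℝ)) * jb (ξ - q.1) ^ (-(2:ℝ))) :=
              mul_le_mul_of_nonneg_right (jb_rpow_le_one (by linarith))
                (mul_nonneg (jb_rpow_nonneg _ _) (jb_rpow_nonneg _ _))
          _ = jb q.1 ^ (-(2:ℝ)) * jb (ξ - q.1) ^ (-(2:ℝ)) := one_mul _
          _ ≤ K q.1 := ptB ξ q.1
      have hIb := key (2*b) hb2lt ξ τ K hKm hK0 hKi hbd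
      rw [← hLdef] at hIb
      have hKval : ∫ x, K x = 4 / jb ξ ^ 2 * (B0 + B0) := by
        rw [hKdef]
        rw [integral_const_mul, integral_add Kjb_int (Kjb_shift_int ξ),
          Kjb_shift_integral ξ, ← hB0def]
      rw [hKval] at hIb
      have hIb' : Itg ≤ ((8*(B0*D)) / jb ξ ^ 2) * L ^ (1-2*b) := by
        calc Itg ≤ 4 / jb ξ ^ 2 * (B0 + B0) * (2 * L ^ (1-2*b)/(1-2*b)) := hIb
          _ = ((8*(B0*D)) / jb ξ ^ 2) * L ^ (1-2*b) := by rw [hDdef]; ring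
      have hXnn : 0 ≤ (8*(B0*D)) / jb ξ ^ 2 := div_nonneg hBD8 (sq_nonneg _)
      have hhalf := half_step hI0 hXnn hL0.le hIb'
      have hXval : ((8*(B0*D)) / jb ξ ^ 2) ^ (1/2:ℝ) = (8*(B0*D)) ^ (1/2:ℝ) / jb ξ := by
        rw [Real.div_rpow hBD8 (sq_nonneg _), sq_rpow_half (jb ξ) (jb_pos ξ).le]
      rw [hXval] at hhalf
      -- bound |ξ| * L^c ≤ 8
      have hc1 : (-1:ℝ) ≤ c := by rw [hcdef]; linarith
      have hl : |ξ|^3/8 ≤ L := by linarith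
      have hstep1 : L ^ c ≤ (|ξ|^3/8) ^ c :=
        Real.rpow_le_rpow_of_nonpos (by positivity) hl hc0
      have hstep2 : ((|ξ|^3/8:ℝ)) ^ c = |ξ| ^ ((3:ℝ)*c) / 8 ^ c := by
        rw [Real.div_rpow (by positivity) (by norm_num)]
        congr 1
        rw [← Real.rpow_natCast |ξ| 3, ← Real.rpow_mul (abs_nonneg ξ)]
        norm_num
      have h8c : (1:ℝ)/8 ≤ (8:ℝ) ^ c := by
        have h1 : (8:ℝ) ^ (-1:ℝ) ≤ 8 ^ c :=
          Real.rpow_le_rpow_of_exponent_le (by norm_num) hc1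
        rw [Real.rpow_neg_one] at h1
        linarith [h1]
      have hnum : |ξ| ^ ((1:ℝ) + 3*c) = |ξ| * |ξ| ^ ((3:ℝ)*c) := by
        rw [Real.rpow_add hξp, Real.rpow_one]
      have hone : |ξ| ^ ((1:ℝ) + 3*c) ≤ 1 :=
        Real.rpow_le_one_of_one_le_of_nonpos hξ1 (by rw [hcdef]; linarith)
      have hξLc : |ξ| * L ^ c ≤ 8 := by
        calc |ξ| * L ^ c ≤ |ξ| * (|ξ| ^ ((3:ℝ)*c) / 8 ^ c) :=
              mul_le_mul_of_nonneg_left (hstep1.trans_eq hstep2) (abs_nonneg ξ)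
          _ = |ξ| ^ ((1:ℝ) + 3*c) / 8 ^ c := by rw [hnum]; ring
          _ ≤ 1 / 8 ^ c :=
              div_le_div_of_nonneg_right hone (Real.rpow_pos_of_pos (show (0:ℝ) < 8 by norm_num) c).le
          _ ≤ 8 := by
              rw [div_le_iff₀ (Real.rpow_pos_of_pos (show (0:ℝ) < 8 by norm_num) c)]
              nlinarith [h8c]
      calc |ξ| * jb ξ * L ^ (-a) * Itg ^ (1/2:ℝ)
          ≤ |ξ| * jb ξ * L ^ (-a) *
              ((8*(B0*D)) ^ (1/2:ℝ) / jb ξ * L ^ ((1-2*b)*(1/2))) :=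
            mul_le_mul_of_nonneg_left hhalf hQnn
        _ = (jb ξ * (jb ξ)⁻¹) * ((8*(B0*D)) ^ (1/2:ℝ)) *
              (|ξ| * (L ^ (-a) * L ^ ((1-2*b)*(1/2)))) := by ring
        _ = (8*(B0*D)) ^ (1/2:ℝ) * (|ξ| * L ^ c) := by
            rw [mul_inv_cancel₀ (jb_pos ξ).ne', hLc]; ring
        _ ≤ (8*(B0*D)) ^ (1/2:ℝ) * 8 := mul_le_mul_of_nonneg_left hξLc hr2
        _ ≤ 72 * (B0*D) ^ (1/2:ℝ) + 24 * (8*(B0*D)) ^ (1/2:ℝ) + 6 * (B0*D) ^ (1/2:ℝ) := by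
            linarith
    · -- Case C : small L
      push_neg at hLξ
      set K : ℝ → ℝ := fun x => 16/(ξ^2)^2 * jb x ^ (-(2:ℝ)) with hKdef
      have hKm : Measurable K := (continuous_const.mul Kjb_cont).measurable
      have hK0 : ∀ x, 0 ≤ K x := fun x =>
        mul_nonneg (div_nonneg (by norm_num) (by positivity)) (jb_rpow_nonneg _ _)
      have hKi : Integrable K := Kjb_int.const_mul _
      have hbd : ∀ q : ℝ × ℝ,
          jb (-q.2 + q.1 ^ 2) ≤ jb (τ - ξ ^ 3) →
          jb (τ - q.2 + (ξ - q.1) ^ 2) ≤ jb (τ - ξ ^ 3) →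
          jb (τ - q.2 + (ξ - q.1) ^ 2) ^ (-(2*b)) *
            (jb q.1 ^ (-(2:ℝ)) * jb (ξ - q.1) ^ (-(2:ℝ))) ≤ K q.1 := by
        intro q h1 h2
        rw [← hLdef] at h1 h2
        have i1 : |τ - ξ^3| ≤ L - 1 := by
          have : L = 1 + |τ - ξ^3| := by rw [hLdef, jb]
          linarith
        have i2 : |(-q.2 + q.1^2)| ≤ L - 1 := by
          have : jb (-q.2 + q.1^2) = 1 + |(-q.2 + q.1^2)| := rfl
          linarith [h1, this ▸ h1]
        have i3 : |τ - q.2 + (ξ - q.1)^2| ≤ L - 1 := by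
          have : jb (τ - q.2 + (ξ - q.1)^2) = 1 + |τ - q.2 + (ξ - q.1)^2| := rfl
          linarith [this ▸ h2]
        have ht : |(τ - ξ^3) + (-q.2 + q.1^2) - (τ - q.2 + (ξ - q.1)^2)| ≤ 3*(L-1) := by
          calc |(τ - ξ^3) + (-q.2 + q.1^2) - (τ - q.2 + (ξ - q.1)^2)|
              ≤ |(τ - ξ^3) + (-q.2 + q.1^2)| + |τ - q.2 + (ξ - q.1)^2| := abs_sub _ _
            _ ≤ |τ - ξ^3| + |(-q.2 + q.1^2)| + |τ - q.2 + (ξ - q.1)^2| := by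
                linarith [abs_add_le (τ - ξ^3) (-q.2 + q.1^2)]
            _ ≤ 3*(L-1) := by linarith
        have hid : (τ - ξ^3) + (-q.2 + q.1^2) - (τ - q.2 + (ξ - q.1)^2)
            = ξ * (2*q.1 - ξ - ξ^2) := by ring
        have ht2 : |ξ| * |2*q.1 - ξ - ξ^2| ≤ 3*(L-1) := by
          rw [← abs_mul, ← hid]; exact ht
        have e3 : |ξ|^3 = ξ^2 * |ξ| := by rw [pow_succ, sq_abs]
        have hr : |2*q.1 - ξ - ξ^2| ≤ 3/8 * ξ^2 := by
          have hA : |ξ| * (8 * |2*q.1 - ξ - ξ^2|) < |ξ| * (3 * ξ^2) := by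
            nlinarith [ht2, hLξ, hL1]
          have := (mul_lt_mul_iff_right₀ hξp).mp hA
          linarith
        have hξsq : |ξ| ≤ ξ^2/8 := by nlinarith [sq_abs ξ]
        have h7 : ξ^2/4 ≤ |ξ - q.1| := by
          have hy : ξ - q.1 ≤ -(ξ^2/4) := by
            have hr2 := (abs_le.mp hr).1
            have hxle := le_abs_self ξ
            linarith
          calc ξ^2/4 ≤ -(ξ - q.1) := by linarith
            _ ≤ |ξ - q.1| := neg_le_abs _
        have h8 : ξ^2/4 ≤ jb (ξ - q.1) := h7.trans (jb_ge_abs _)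
        have hpos4 : (0:ℝ) < (ξ^2/4)^2 := pow_pos (by linarith) 2
        have hDb : jb (ξ - q.1) ^ (-(2:ℝ)) ≤ 16/(ξ^2)^2 := by
          rw [rpow_neg_two _ (jb_pos _)]
          have hsq : (ξ^2/4)^2 ≤ jb (ξ - q.1)^2 :=
            pow_le_pow_left₀ (by linarith) h8 2
          calc (jb (ξ - q.1)^2)⁻¹ ≤ ((ξ^2/4)^2)⁻¹ := inv_anti₀ hpos4 hsq
            _ = 16/(ξ^2)^2 := by
                field_simp
                ring
        calc jb (τ - q.2 + (ξ - q.1) ^ 2) ^ (-(2*b)) *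
              (jb q.1 ^ (-(2:ℝ)) * jb (ξ - q.1) ^ (-(2:ℝ)))
            ≤ 1 * (jb q.1 ^ (-(2:ℝ)) * (16/(ξ^2)^2)) :=
              mul_le_mul (jb_rpow_le_one (by linarith))
                (mul_le_mul_of_nonneg_left hDb (jb_rpow_nonneg _ _))
                (mul_nonneg (jb_rpow_nonneg _ _) (jb_rpow_nonneg _ _)) one_pos.le
          _ = K q.1 := by rw [hKdef]; ring
      have hIb := key (2*b) hb2lt ξ τ K hKm hK0 hKi hbd
      rw [← hLdef] at hIb
      have hKval : ∫ x, K x = 16/(ξ^2)^2 * B0 := by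
        rw [hKdef, integral_const_mul, ← hB0def]
      rw [hKval] at hIb
      have hIb' : Itg ≤ ((16*(B0*D)) / (ξ^2)^2) * L ^ (1-2*b) := by
        calc Itg ≤ 16/(ξ^2)^2 * B0 * (2 * L ^ (1-2*b)/(1-2*b)) := hIb
          _ = ((16*(B0*D)) / (ξ^2)^2) * L ^ (1-2*b) := by rw [hDdef]; ring
      have hBD16 : (0:ℝ) ≤ 16*(B0*D) := by linarith
      have hXnn : 0 ≤ (16*(B0*D)) / (ξ^2)^2 := div_nonneg hBD16 (by positivity)
      have hhalf := half_step hI0 hXnn hL0.le hIb'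
      have hXval : ((16*(B0*D)) / (ξ^2)^2) ^ (1/2:ℝ)
          = 4 * (B0*D) ^ (1/2:ℝ) / ξ^2 := by
        rw [Real.div_rpow hBD16 (by positivity), sq_rpow_half (ξ^2) (sq_nonneg ξ)]
        congr 1
        rw [show (16:ℝ)*(B0*D) = 4^2*(B0*D) by norm_num,
          Real.mul_rpow (by norm_num) hBD, sq_rpow_half 4 (by norm_num)]
      rw [hXval] at hhalf
      have hfrac : |ξ| * jb ξ / ξ^2 ≤ 3/2 := by
        rw [div_le_iff₀ hx2]
        have : jb ξ = 1 + |ξ| := rfl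
        nlinarith [sq_abs ξ]
      have hfracnn : 0 ≤ |ξ| * jb ξ / ξ^2 :=
        div_nonneg (mul_nonneg (abs_nonneg ξ) (jb_pos ξ).le) (sq_nonneg ξ)
      calc |ξ| * jb ξ * L ^ (-a) * Itg ^ (1/2:ℝ)
          ≤ |ξ| * jb ξ * L ^ (-a) *
              (4 * (B0*D) ^ (1/2:ℝ) / ξ^2 * L ^ ((1-2*b)*(1/2))) :=
            mul_le_mul_of_nonneg_left hhalf hQnn
        _ = (|ξ| * jb ξ / ξ^2) * (L ^ (-a) * L ^ ((1-2*b)*(1/2))) *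
              (4 * (B0*D) ^ (1/2:ℝ)) := by ring
        _ = (|ξ| * jb ξ / ξ^2) * L ^ c * (4 * (B0*D) ^ (1/2:ℝ)) := by rw [hLc]
        _ ≤ (3/2) * 1 * (4 * (B0*D) ^ (1/2:ℝ)) :=
            mul_le_mul (mul_le_mul hfrac hLc1 hLcnn (by norm_num)) le_rfl
              (by linarith [hr1]) (by norm_num)
        _ = 6 * (B0*D) ^ (1/2:ℝ) := by ring
        _ ≤ 72 * (B0*D) ^ (1/2:ℝ) + 24 * (8*(B0*D)) ^ (1/2:ℝ) + 6 * (B0*D) ^ (1/2:ℝ) := by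
            linarith

end
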